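/- Correctness of the 2-SMIN comparison in the case π = 0: let ℓ, σ be natural numbers and N a natural number with N > 2^(σ+ℓ+3). Let x, y be integers with |x| ≤ 2^ℓ and |y| ≤ 2^ℓ, let r₁ be an integer with 1 ≤ r₁ < 2^σ, and let r₂ be an integer with 0 < r₂, 2·r₂ ≤ N, and 2·(r₁ + r₂) > N. Then the residue D = (r₁·(x − y + 1) + r₂) mod N satisfies 2·D > N if and only if x ≥ y. -/
import Mathlib


/-- Correctness of the 2-SMIN comparison in the case `π = 0`:
`D = (r₁·(x − y + 1) + r₂) mod N` satisfies `2·D > N` iff `x ≥ y`. -/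
theorem twoSMIN_compare_pi0 (ℓ σ N : ℕ) (hN : 2 ^ (σ + ℓ + 3) < N)
    (x y : ℤ) (hx : |x| ≤ 2 ^ ℓ) (hy : |y| ≤ 2 ^ ℓ)
    (r₁ : ℤ) (hr₁ : 1 ≤ r₁) (hr₁' : r₁ < 2 ^ σ)
    (r₂ : ℤ) (hr₂ : 0 < r₂) (hr₂' : 2 * r₂ ≤ (N : ℤ))
    (hsum : (N : ℤ) < 2 * (r₁ + r₂)) :
    2 * ((r₁ * (x - y + 1) + r₂) % (N : ℤ)) > (N : ℤ) ↔ x ≥ y := by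
  have hNpow : (2:ℤ) ^ (σ + ℓ + 3) < (N : ℤ) := by exact_mod_cast hN
  obtain ⟨hx1, hx2⟩ := abs_le.mp hx
  obtain ⟨hy1, hy2⟩ := abs_le.mp hy
  have hpow : (2:ℤ) ^ (σ + ℓ + 3) = 2 ^ σ * 2 ^ ℓ * 8 := by
    rw [pow_add, pow_add]; ring
  have hℓpos : (1:ℤ) ≤ 2 ^ ℓ := by exact_mod_cast Nat.one_le_two_pow
  by_cases h : y ≤ x
  · -- x ≥ y: t ≥ 1
    have ht1 : (1:ℤ) ≤ x - y + 1 := by linarith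
    have ht2 : x - y + 1 ≤ 4 * 2 ^ ℓ := by linarith
    have hub : r₁ * (x - y + 1) + r₂ < (N : ℤ) := by
      nlinarith [mul_le_mul_of_nonneg_left ht2 (by linarith : (0:ℤ) ≤ r₁)]
    have hlb : (0:ℤ) ≤ r₁ * (x - y + 1) + r₂ := by nlinarith
    rw [Int.emod_eq_of_lt hlb hub]
    constructor
    · intro _; exact h
    · intro _; nlinarith
  · -- x < y: t ≤ 0
    push_neg at h
    have ht1 : x - y + 1 ≤ 0 := by linarith
    have ht2 : -(2 * 2 ^ ℓ) ≤ x - y + 1 := by linarith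
    have hub : r₁ * (x - y + 1) + r₂ < (N : ℤ) := by nlinarith
    have hlb : (0:ℤ) ≤ r₁ * (x - y + 1) + r₂ := by
      nlinarith [mul_le_mul_of_nonneg_left ht2 (by linarith : (0:ℤ) ≤ r₁)]
    rw [Int.emod_eq_of_lt hlb hub]
    constructor
    · intro hc; exfalso; nlinarith
    · intro hc; exact absurd hc (not_le.mpr h)
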